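/- Let σ₁ = [[0,1],[1,0]], σ₂ = [[0,−i],[i,0]], σ₃ = [[1,0],[0,−1]] be the Pauli matrices in Matrix (Fin 2) (Fin 2) ℂ, define the Dirac matrices Γ₀ = [[0, I],[I, 0]] and Γ_k = [[0, σ_k],[−σ_k, 0]] (k = 1, 2, 3) in Matrix (Fin 4) (Fin 4) ℂ, I being the 2×2 identity, and set Γ₅ := i Γ₀ Γ₁ Γ₂ Γ₃ and C := −i Γ₀ Γ₂. Let S⁺ := {s ∈ ℂ⁴ : Γ₅ s = −s} and S⁻ := {s ∈ ℂ⁴ : Γ₅ s = s} be the Γ₅-eigenspaces. Then (1) the eigenspaces are mutually ω-orthogonal for ω(s, s') = sᵀ C s': if s ∈ S⁺ and s' ∈ S⁻ then sᵀ C s' = 0 and s'ᵀ C s = 0; and (2) each eigenspace is isotropic for β₃(s, s') = Re(conj(s)ᵀ Γ₀ s'): if s, s' both lie in S⁺, or both lie in S⁻, then β₃(s, s') = 0. -/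

import Mathlib

open Matrix

/-- The Pauli matrices. -/
noncomputable def pauli : Fin 3 → Matrix (Fin 2) (Fin 2) ℂ :=
  ![!![0, 1; 1, 0], !![0, -Complex.I; Complex.I, 0], !![1, 0; 0, -1]]

/-- Assemble a `4 × 4` matrix out of four `2 × 2` blocks. -/
noncomputable def blocks4 (A B C D : Matrix (Fin 2) (Fin 2) ℂ) :
    Matrix (Fin 4) (Fin 4) ℂ :=
  (Matrix.reindex (finSumFinEquiv (m := 2) (n := 2)) (finSumFinEquiv (m := 2) (n := 2)))
    (fromBlocks A B C D)

/-- The Dirac matrices `Γ₀, Γ₁, Γ₂, Γ₃`, as block matrices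
`Γ₀ = [[0, I],[I, 0]]`, `Γ_k = [[0, σ_k],[−σ_k, 0]]`. -/
noncomputable def Γ : Fin 4 → Matrix (Fin 4) (Fin 4) ℂ :=
  ![blocks4 0 1 1 0,
    blocks4 0 (pauli 0) (-(pauli 0)) 0,
    blocks4 0 (pauli 1) (-(pauli 1)) 0,
    blocks4 0 (pauli 2) (-(pauli 2)) 0]

/-- The chirality matrix `Γ₅ = i Γ₀ Γ₁ Γ₂ Γ₃`. -/
noncomputable def Γ₅ : Matrix (Fin 4) (Fin 4) ℂ :=
  Complex.I • (Γ 0 * Γ 1 * Γ 2 * Γ 3)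

/-- The charge conjugation matrix `C = −i Γ₀ Γ₂`. -/
noncomputable def chargeConj : Matrix (Fin 4) (Fin 4) ℂ :=
  (-Complex.I) • (Γ 0 * Γ 2)

/-- The bilinear form `ω(s, s') = sᵀ C s'`. -/
noncomputable def ω (s s' : Fin 4 → ℂ) : ℂ :=
  s ⬝ᵥ chargeConj.mulVec s'

/-- The real bilinear form `β₃(s, s') = Re(conj(s)ᵀ Γ₀ s')`. -/
noncomputable def β₃ (s s' : Fin 4 → ℂ) : ℝ :=
  (star s ⬝ᵥ (Γ 0).mulVec s').re



lemma blocks4_eq (A B C D : Matrix (Fin 2) (Fin 2) ℂ) :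
    blocks4 A B C D =
      !![A 0 0, A 0 1, B 0 0, B 0 1;
         A 1 0, A 1 1, B 1 0, B 1 1;
         C 0 0, C 0 1, D 0 0, D 0 1;
         C 1 0, C 1 1, D 1 0, D 1 1] := by
  have e0 : (finSumFinEquiv (m := 2) (n := 2)).symm 0 = Sum.inl 0 := by decide
  have e1 : (finSumFinEquiv (m := 2) (n := 2)).symm 1 = Sum.inl 1 := by decide
  have e2 : (finSumFinEquiv (m := 2) (n := 2)).symm 2 = Sum.inr 0 := by decide
  have e3 : (finSumFinEquiv (m := 2) (n := 2)).symm 3 = Sum.inr 1 := by decide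
  ext i j
  fin_cases i <;> fin_cases j <;>
    simp [blocks4, e0, e1, e2, e3]

lemma Γ₀_eq : Γ 0 = !![0,0,1,0; 0,0,0,1; 1,0,0,0; 0,1,0,0] := by
  show blocks4 0 1 1 0 = _
  rw [blocks4_eq]
  norm_num [Matrix.one_apply]

lemma Γ₅_eq : Γ₅ = !![-1,0,0,0; 0,-1,0,0; 0,0,1,0; 0,0,0,1] := by
  have h0 := Γ₀_eq
  have h1 : Γ 1 = !![0,0,0,1; 0,0,1,0; 0,-1,0,0; -1,0,0,0] := by
    show blocks4 0 (pauli 0) (-(pauli 0)) 0 = _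
    rw [blocks4_eq]; norm_num [pauli]
  have h2 : Γ 2 = !![0,0,0,-Complex.I; 0,0,Complex.I,0; 0,Complex.I,0,0; -Complex.I,0,0,0] := by
    show blocks4 0 (pauli 1) (-(pauli 1)) 0 = _
    rw [blocks4_eq]; norm_num [pauli]
  have h3 : Γ 3 = !![0,0,1,0; 0,0,0,-1; -1,0,0,0; 0,1,0,0] := by
    show blocks4 0 (pauli 2) (-(pauli 2)) 0 = _
    rw [blocks4_eq]; norm_num [pauli, Matrix.cons_val_two, Matrix.tail_cons, Matrix.head_cons]
  have p1 : !![(0:ℂ),0,1,0; 0,0,0,1; 1,0,0,0; 0,1,0,0] * !![0,0,0,1; 0,0,1,0; 0,-1,0,0; -1,0,0,0]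
      = !![0,-1,0,0; -1,0,0,0; 0,0,0,1; 0,0,1,0] := by
    ext i j
    fin_cases i <;> fin_cases j <;>
      simp [Matrix.mul_apply, Fin.sum_univ_four, Matrix.vecHead, Matrix.vecTail]
  have p2 : !![(0:ℂ),-1,0,0; -1,0,0,0; 0,0,0,1; 0,0,1,0] *
        !![0,0,0,-Complex.I; 0,0,Complex.I,0; 0,Complex.I,0,0; -Complex.I,0,0,0]
      = !![0,0,-Complex.I,0; 0,0,0,Complex.I; -Complex.I,0,0,0; 0,Complex.I,0,0] := by
    ext i j
    fin_cases i <;> fin_cases j <;>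
      simp [Matrix.mul_apply, Fin.sum_univ_four, Matrix.vecHead, Matrix.vecTail]
  have p3 : !![(0:ℂ),0,-Complex.I,0; 0,0,0,Complex.I; -Complex.I,0,0,0; 0,Complex.I,0,0] *
        !![0,0,1,0; 0,0,0,-1; -1,0,0,0; 0,1,0,0]
      = !![Complex.I,0,0,0; 0,Complex.I,0,0; 0,0,-Complex.I,0; 0,0,0,-Complex.I] := by
    ext i j
    fin_cases i <;> fin_cases j <;>
      simp [Matrix.mul_apply, Fin.sum_univ_four, Matrix.vecHead, Matrix.vecTail]
  rw [Γ₅, h0, h1, h2, h3, p1, p2, p3]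
  ext i j
  fin_cases i <;> fin_cases j <;>
    simp [Matrix.vecHead, Matrix.vecTail, Complex.ext_iff]

lemma chargeConj_eq : chargeConj = !![0,1,0,0; -1,0,0,0; 0,0,0,-1; 0,0,1,0] := by
  have h0 := Γ₀_eq
  have h2 : Γ 2 = !![0,0,0,-Complex.I; 0,0,Complex.I,0; 0,Complex.I,0,0; -Complex.I,0,0,0] := by
    show blocks4 0 (pauli 1) (-(pauli 1)) 0 = _
    rw [blocks4_eq]; norm_num [pauli]
  have p : !![(0:ℂ),0,1,0; 0,0,0,1; 1,0,0,0; 0,1,0,0] *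
        !![0,0,0,-Complex.I; 0,0,Complex.I,0; 0,Complex.I,0,0; -Complex.I,0,0,0]
      = !![0,Complex.I,0,0; -Complex.I,0,0,0; 0,0,0,-Complex.I; 0,0,Complex.I,0] := by
    ext i j
    fin_cases i <;> fin_cases j <;>
      simp [Matrix.mul_apply, Fin.sum_univ_four, Matrix.vecHead, Matrix.vecTail]
  rw [chargeConj, h0, h2, p]
  ext i j
  fin_cases i <;> fin_cases j <;>
    simp [Matrix.vecHead, Matrix.vecTail, Complex.ext_iff]

lemma eig_neg {s : Fin 4 → ℂ} (h : Γ₅.mulVec s = -s) : s 2 = 0 ∧ s 3 = 0 := by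
  rw [Γ₅_eq] at h
  have h2 := congrFun h 2
  have h3 := congrFun h 3
  simp [Matrix.mulVec, dotProduct, Fin.sum_univ_four, Matrix.vecHead, Matrix.vecTail] at h2 h3
  exact ⟨by linear_combination h2 / 2, by linear_combination h3 / 2⟩

lemma eig_pos {s : Fin 4 → ℂ} (h : Γ₅.mulVec s = s) : s 0 = 0 ∧ s 1 = 0 := by
  rw [Γ₅_eq] at h
  have h0 := congrFun h 0
  have h1 := congrFun h 1
  simp [Matrix.mulVec, dotProduct, Fin.sum_univ_four, Matrix.vecHead, Matrix.vecTail] at h0 h1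
  exact ⟨by linear_combination -h0 / 2, by linear_combination -h1 / 2⟩

/-- The Weyl spinor eigenspaces `S⁺ = ker(Γ₅ + 1)`, `S⁻ = ker(Γ₅ - 1)`
are mutually `ω`-orthogonal and both `β₃`-isotropic. -/
theorem weyl_eigenspaces_orthogonality :
    (∀ s s' : Fin 4 → ℂ, Γ₅.mulVec s = -s → Γ₅.mulVec s' = s' →
      ω s s' = 0 ∧ ω s' s = 0) ∧
    (∀ s s' : Fin 4 → ℂ, Γ₅.mulVec s = -s → Γ₅.mulVec s' = -s' → β₃ s s' = 0) ∧
    (∀ s s' : Fin 4 → ℂ, Γ₅.mulVec s = s → Γ₅.mulVec s' = s' → β₃ s s' = 0) := by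
  refine ⟨?_, ?_, ?_⟩
  · intro s s' h h'
    obtain ⟨hs2, hs3⟩ := eig_neg h
    obtain ⟨h0, h1⟩ := eig_pos h'
    constructor <;>
      simp [ω, chargeConj_eq, Matrix.mulVec, dotProduct, Fin.sum_univ_four, Matrix.vecHead, Matrix.vecTail,
        hs2, hs3, h0, h1]
  · intro s s' h h'
    obtain ⟨hs2, hs3⟩ := eig_neg h
    obtain ⟨h2, h3⟩ := eig_neg h'
    simp [β₃, Γ₀_eq, Matrix.mulVec, dotProduct, Fin.sum_univ_four, Matrix.vecHead, Matrix.vecTail, hs2, hs3, h2, h3]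
  · intro s s' h h'
    obtain ⟨hs0, hs1⟩ := eig_pos h
    obtain ⟨h0, h1⟩ := eig_pos h'
    simp [β₃, Γ₀_eq, Matrix.mulVec, dotProduct, Fin.sum_univ_four, Matrix.vecHead, Matrix.vecTail, hs0, hs1, h0, h1]
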